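/- arXiv:2310.07973 — 2 statements merged into one kernel-verified Lean document; each statement's English description precedes it below -/
import Mathlib

section
/- Hoeffding-type covariance identity: if X and Y are real random variables with finite second moments and ψ : ℝ → ℝ is continuous with ψ(X), ψ(Y) square-integrable, then Cov(ψ(X), ψ(Y)) = ∫∫ [P(X < a, Y < b) − P(X < a)·P(Y < b)] dψ(a) dψ(b), where the integral is with respect to the (Lebesgue–Stieltjes) measure induced by ψ in each coordinate. -/
open MeasureTheory ProbabilityTheory

section Helpers
variable {Ω : Type*} [MeasurableSpace Ω] {P : Measure Ω} [IsProbabilityMeasure P]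

lemma hcid_mp_fst : MeasurePreserving (Prod.fst : Ω × Ω → Ω) (P.prod P) P :=
  ⟨measurable_fst, by simp⟩

lemma hcid_mp_snd : MeasurePreserving (Prod.snd : Ω × Ω → Ω) (P.prod P) P :=
  ⟨measurable_snd, by simp⟩

lemma hcid_int_mul {u v : Ω → ℝ} (hu : MemLp u 2 P) (hv : MemLp v 2 P) :
    Integrable (fun ω => u ω * v ω) P := by
  rw [← memLp_one_iff_integrable]
  have h := MemLp.smul (𝕜 := ℝ) (p := 2) (q := 2) (r := 1) hv hu
  simpa [Pi.smul_apply, smul_eq_mul, Pi.mul_def] using h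

/-- Expansion lemma: integral over product of (u₁-u₂)(v₁-v₂). -/
lemma hcid_expand {u v : Ω → ℝ} (hu : MemLp u 2 P) (hv : MemLp v 2 P) :
    ∫ p, (u p.1 - u p.2) * (v p.1 - v p.2) ∂(P.prod P)
      = 2 * ((∫ ω, u ω * v ω ∂P) - (∫ ω, u ω ∂P) * ∫ ω, v ω ∂P) := by
  have hu1 : MemLp (fun p : Ω × Ω => u p.1) 2 (P.prod P) := hu.comp_measurePreserving hcid_mp_fst
  have hu2 : MemLp (fun p : Ω × Ω => u p.2) 2 (P.prod P) := hu.comp_measurePreserving hcid_mp_snd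
  have hv1 : MemLp (fun p : Ω × Ω => v p.1) 2 (P.prod P) := hv.comp_measurePreserving hcid_mp_fst
  have hv2 : MemLp (fun p : Ω × Ω => v p.2) 2 (P.prod P) := hv.comp_measurePreserving hcid_mp_snd
  have i11 : Integrable (fun p : Ω × Ω => u p.1 * v p.1) (P.prod P) := hcid_int_mul hu1 hv1
  have i12 : Integrable (fun p : Ω × Ω => u p.1 * v p.2) (P.prod P) := hcid_int_mul hu1 hv2
  have i21 : Integrable (fun p : Ω × Ω => u p.2 * v p.1) (P.prod P) := hcid_int_mul hu2 hv1
  have i22 : Integrable (fun p : Ω × Ω => u p.2 * v p.2) (P.prod P) := hcid_int_mul hu2 hv2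
  have huv : Integrable (fun ω => u ω * v ω) P := hcid_int_mul hu hv
  have e11 : ∫ p, u p.1 * v p.1 ∂(P.prod P) = ∫ ω, u ω * v ω ∂P := by
    have h := integral_map (φ := (Prod.fst : Ω × Ω → Ω)) (μ := P.prod P)
      measurable_fst.aemeasurable (f := fun ω => u ω * v ω)
      (by rw [(hcid_mp_fst (P := P)).map_eq]; exact huv.1)
    rw [(hcid_mp_fst (P := P)).map_eq] at h
    exact h.symm
  have e22 : ∫ p, u p.2 * v p.2 ∂(P.prod P) = ∫ ω, u ω * v ω ∂P := by
    have h := integral_map (φ := (Prod.snd : Ω × Ω → Ω)) (μ := P.prod P)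
      measurable_snd.aemeasurable (f := fun ω => u ω * v ω)
      (by rw [(hcid_mp_snd (P := P)).map_eq]; exact huv.1)
    rw [(hcid_mp_snd (P := P)).map_eq] at h
    exact h.symm
  have e12 : ∫ p, u p.1 * v p.2 ∂(P.prod P) = (∫ ω, u ω ∂P) * ∫ ω, v ω ∂P :=
    integral_prod_mul u v
  have e21 : ∫ p, u p.2 * v p.1 ∂(P.prod P) = (∫ ω, u ω ∂P) * ∫ ω, v ω ∂P := by
    have := integral_prod_mul (μ := P) (ν := P) v u
    calc ∫ p, u p.2 * v p.1 ∂(P.prod P) = ∫ p, v p.1 * u p.2 ∂(P.prod P) := by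
          congr 1; funext p; ring
      _ = (∫ ω, v ω ∂P) * ∫ ω, u ω ∂P := this
      _ = _ := mul_comm _ _
  have : (fun p : Ω × Ω => (u p.1 - u p.2) * (v p.1 - v p.2))
      = fun p => u p.1 * v p.1 + u p.2 * v p.2 - u p.1 * v p.2 - u p.2 * v p.1 :=
    funext fun p => by ring
  rw [this,
    integral_sub (f := fun p : Ω × Ω => u p.1 * v p.1 + u p.2 * v p.2 - u p.1 * v p.2)
      (g := fun p : Ω × Ω => u p.2 * v p.1) (by exact (i11.add i22).sub i12) i21,
    integral_sub (f := fun p : Ω × Ω => u p.1 * v p.1 + u p.2 * v p.2)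
      (g := fun p : Ω × Ω => u p.1 * v p.2) (by exact i11.add i22) i12,
    integral_add i11 i22, e11, e22, e12, e21]
  ring
end Helpers

open Set

/-- The signed indicator difference whose Stieltjes integral is `ψ x₁ - ψ x₂`. -/
noncomputable def hcid_k (x₁ x₂ a : ℝ) : ℝ :=
  (if x₂ < a then 1 else 0) - (if x₁ < a then 1 else 0)

lemma hcid_k_eq (x₁ x₂ : ℝ) : hcid_k x₁ x₂ =
    (Ioc x₂ x₁).indicator (fun _ => (1:ℝ)) - (Ioc x₁ x₂).indicator (fun _ => (1:ℝ)) := by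
  funext a
  simp only [hcid_k, Pi.sub_apply, indicator_apply, mem_Ioc]
  by_cases h1 : x₂ < a <;> by_cases h2 : x₁ < a
  · simp [h1, h2, not_le.2 h1, not_le.2 h2]
  · simp [h1, h2, not_lt.1 h2, not_le.2 h1]
  · simp [h1, h2, not_lt.1 h1, not_le.2 h2]
  · simp [h1, h2]

lemma hcid_ioc_indicator_integrable (ψ : StieltjesFunction ℝ) (y z : ℝ) :
    Integrable ((Ioc z y).indicator (fun _ => (1:ℝ))) ψ.measure := by
  rw [integrable_indicator_iff measurableSet_Ioc]
  exact integrableOn_const (by rw [ψ.measure_Ioc]; exact ENNReal.ofReal_ne_top)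

lemma hcid_k_integrable (ψ : StieltjesFunction ℝ) (x₁ x₂ : ℝ) :
    Integrable (hcid_k x₁ x₂) ψ.measure := by
  rw [hcid_k_eq]
  exact (hcid_ioc_indicator_integrable ψ x₁ x₂).sub (hcid_ioc_indicator_integrable ψ x₂ x₁)

lemma hcid_k_integral (ψ : StieltjesFunction ℝ) (x₁ x₂ : ℝ) :
    ∫ a, hcid_k x₁ x₂ a ∂ψ.measure = ψ x₁ - ψ x₂ := by
  have e : ∀ y z : ℝ, ∫ a, (Ioc z y).indicator (fun _ => (1:ℝ)) a ∂ψ.measure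
      = (ψ.measure (Ioc z y)).toReal := by
    intro y z
    rw [integral_indicator_const (1:ℝ) measurableSet_Ioc, smul_eq_mul, mul_one, measureReal_def]
  calc ∫ a, hcid_k x₁ x₂ a ∂ψ.measure
      = ∫ a, ((Ioc x₂ x₁).indicator (fun _ => (1:ℝ)) a
          - (Ioc x₁ x₂).indicator (fun _ => (1:ℝ)) a) ∂ψ.measure := by
        simp_rw [← Pi.sub_apply ((Ioc x₂ x₁).indicator _), ← hcid_k_eq]
    _ = (ψ.measure (Ioc x₂ x₁)).toReal - (ψ.measure (Ioc x₁ x₂)).toReal := by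
        rw [integral_sub (hcid_ioc_indicator_integrable ψ x₁ x₂)
          (hcid_ioc_indicator_integrable ψ x₂ x₁), e, e]
    _ = ψ x₁ - ψ x₂ := by
        rw [ψ.measure_Ioc, ψ.measure_Ioc]
        rcases le_total x₂ x₁ with hle | hle
        · rw [ENNReal.toReal_ofReal (by linarith [ψ.mono hle]),
            ENNReal.ofReal_of_nonpos (by linarith [ψ.mono hle])]
          simp
        · rw [ENNReal.ofReal_of_nonpos (by linarith [ψ.mono hle]),
            ENNReal.toReal_ofReal (by linarith [ψ.mono hle])]
          simp only [ENNReal.toReal_zero]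
          ring

lemma hcid_k_nonneg {x₁ x₂ : ℝ} (h : x₂ ≤ x₁) (a : ℝ) : 0 ≤ hcid_k x₁ x₂ a := by
  simp only [hcid_k]
  rcases lt_or_ge x₂ a with h1 | h1 <;> rcases lt_or_ge x₁ a with h2 | h2
  · simp [h1, h2]
  · simp [h1, not_lt.2 h2]
  · linarith
  · simp [not_lt.2 h1, not_lt.2 h2]

lemma hcid_k_neg_swap (x₁ x₂ a : ℝ) : hcid_k x₂ x₁ a = - hcid_k x₁ x₂ a := by
  unfold hcid_k; ring

lemma hcid_abs_k (x₁ x₂ a : ℝ) :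
    |hcid_k x₁ x₂ a| = hcid_k (max x₁ x₂) (min x₁ x₂) a := by
  rcases le_total x₂ x₁ with hle | hle
  · rw [max_eq_left hle, min_eq_right hle]
    exact abs_of_nonneg (hcid_k_nonneg hle a)
  · rw [max_eq_right hle, min_eq_left hle]
    have h0 := hcid_k_nonneg hle a
    rw [hcid_k_neg_swap x₁ x₂ a] at h0 ⊢
    exact abs_of_nonpos (by linarith)

lemma hcid_k_abs_integral (ψ : StieltjesFunction ℝ) (x₁ x₂ : ℝ) :
    ∫ a, |hcid_k x₁ x₂ a| ∂ψ.measure = |ψ x₁ - ψ x₂| := by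
  simp_rw [hcid_abs_k]
  rw [hcid_k_integral]
  rcases le_total x₂ x₁ with hle | hle
  · rw [max_eq_left hle, min_eq_right hle, abs_of_nonneg (by linarith [ψ.mono hle])]
  · rw [max_eq_right hle, min_eq_left hle, abs_of_nonpos (by linarith [ψ.mono hle])]
    ring

/-- Hoeffding-type covariance identity: for real random variables `X, Y` with finite
second moments and a continuous (Stieltjes) function `ψ` with `ψ(X), ψ(Y)`
square-integrable,
`Cov(ψ(X), ψ(Y)) = ∫∫ [P(X < a, Y < b) − P(X < a)·P(Y < b)] dψ(a) dψ(b)`,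
where the integrals are with respect to the Lebesgue–Stieltjes measure induced by `ψ`. -/
theorem hoeffding_covariance_identity {Ω : Type*} [MeasurableSpace Ω]
    (P : Measure Ω) [IsProbabilityMeasure P] (X Y : Ω → ℝ)
    (hX : Measurable X) (hY : Measurable Y)
    (hX2 : MemLp X 2 P) (hY2 : MemLp Y 2 P)
    (ψ : StieltjesFunction ℝ) (hψcont : Continuous ψ)
    (hψX2 : MemLp (fun ω => ψ (X ω)) 2 P) (hψY2 : MemLp (fun ω => ψ (Y ω)) 2 P) :
    ∫ ω, ψ (X ω) * ψ (Y ω) ∂P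
        - (∫ ω, ψ (X ω) ∂P) * (∫ ω, ψ (Y ω) ∂P)
      = ∫ a, ∫ b, ((P {ω | X ω < a ∧ Y ω < b}).toReal
          - (P {ω | X ω < a}).toReal * (P {ω | Y ω < b}).toReal)
            ∂ψ.measure ∂ψ.measure := by
  set μ : Measure (Ω × Ω) := P.prod P with hμ
  set ν : Measure (ℝ × ℝ) := ψ.measure.prod ψ.measure with hν
  set F : (Ω × Ω) → (ℝ × ℝ) → ℝ :=
    fun w p => hcid_k (X w.1) (X w.2) p.1 * hcid_k (Y w.1) (Y w.2) p.2 with hF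
  set g : ℝ × ℝ → ℝ := fun p => (P {ω | X ω < p.1 ∧ Y ω < p.2}).toReal
      - (P {ω | X ω < p.1}).toReal * (P {ω | Y ω < p.2}).toReal with hg
  -- measurability of the uncurried kernel
  have hkm : ∀ (Z : Ω → ℝ), Measurable Z →
      Measurable (fun q : (Ω × Ω) × (ℝ × ℝ) => hcid_k (Z q.1.1) (Z q.1.2) q.2.1) := by
    intro Z hZ
    unfold hcid_k
    apply Measurable.sub
    · exact Measurable.ite
        (measurableSet_lt (hZ.comp (measurable_snd.comp measurable_fst))
          (measurable_fst.comp measurable_snd)) measurable_const measurable_const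
    · exact Measurable.ite
        (measurableSet_lt (hZ.comp (measurable_fst.comp measurable_fst))
          (measurable_fst.comp measurable_snd)) measurable_const measurable_const
  have hkm' : ∀ (Z : Ω → ℝ), Measurable Z →
      Measurable (fun q : (Ω × Ω) × (ℝ × ℝ) => hcid_k (Z q.1.1) (Z q.1.2) q.2.2) := by
    intro Z hZ
    unfold hcid_k
    apply Measurable.sub
    · exact Measurable.ite
        (measurableSet_lt (hZ.comp (measurable_snd.comp measurable_fst))
          (measurable_snd.comp measurable_snd)) measurable_const measurable_const
    · exact Measurable.ite
        (measurableSet_lt (hZ.comp (measurable_fst.comp measurable_fst))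
          (measurable_snd.comp measurable_snd)) measurable_const measurable_const
  have hFm : AEStronglyMeasurable (fun q : (Ω × Ω) × (ℝ × ℝ) => F q.1 q.2) (μ.prod ν) :=
    ((hkm X hX).mul (hkm' Y hY)).aestronglyMeasurable
  -- square-integrable composites on the product space
  have hpX1 : MemLp (fun w : Ω × Ω => ψ (X w.1)) 2 μ :=
    hψX2.comp_measurePreserving hcid_mp_fst
  have hpX2 : MemLp (fun w : Ω × Ω => ψ (X w.2)) 2 μ :=
    hψX2.comp_measurePreserving hcid_mp_snd
  have hpY1 : MemLp (fun w : Ω × Ω => ψ (Y w.1)) 2 μ :=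
    hψY2.comp_measurePreserving hcid_mp_fst
  have hpY2 : MemLp (fun w : Ω × Ω => ψ (Y w.2)) 2 μ :=
    hψY2.comp_measurePreserving hcid_mp_snd
  have hprod_int : Integrable
      (fun w : Ω × Ω => (ψ (X w.1) - ψ (X w.2)) * (ψ (Y w.1) - ψ (Y w.2))) μ :=
    hcid_int_mul (hpX1.sub hpX2) (hpY1.sub hpY2)
  have habs : Integrable
      (fun w : Ω × Ω => |ψ (X w.1) - ψ (X w.2)| * |ψ (Y w.1) - ψ (Y w.2)|) μ := by
    have := hprod_int.abs
    simpa [abs_mul] using this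
  -- integrability of the kernel on the big product space
  have hbig : Integrable (fun q : (Ω × Ω) × (ℝ × ℝ) => F q.1 q.2) (μ.prod ν) := by
    rw [integrable_prod_iff hFm]
    constructor
    · exact Filter.Eventually.of_forall fun w =>
        (hcid_k_integrable ψ (X w.1) (X w.2)).mul_prod (hcid_k_integrable ψ (Y w.1) (Y w.2))
    · have he : (fun w : Ω × Ω => ∫ p, ‖F w p‖ ∂ν)
          = fun w => |ψ (X w.1) - ψ (X w.2)| * |ψ (Y w.1) - ψ (Y w.2)| := by
        funext w
        have : (fun p : ℝ × ℝ => ‖F w p‖)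
            = fun p => |hcid_k (X w.1) (X w.2) p.1| * |hcid_k (Y w.1) (Y w.2) p.2| := by
          funext p
          simp [hF, Real.norm_eq_abs, abs_mul]
        rw [this, integral_prod_mul (fun a => |hcid_k (X w.1) (X w.2) a|)
          (fun b => |hcid_k (Y w.1) (Y w.2) b|), hcid_k_abs_integral, hcid_k_abs_integral]
      rw [he]
      exact habs
  -- inner integral over ℝ² for fixed ω
  have inner1 : ∀ w : Ω × Ω,
      ∫ p, F w p ∂ν = (ψ (X w.1) - ψ (X w.2)) * (ψ (Y w.1) - ψ (Y w.2)) := by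
    intro w
    rw [show (fun p : ℝ × ℝ => F w p)
        = fun p => (hcid_k (X w.1) (X w.2)) p.1 * (hcid_k (Y w.1) (Y w.2)) p.2 from rfl,
      integral_prod_mul (hcid_k (X w.1) (X w.2)) (hcid_k (Y w.1) (Y w.2)),
      hcid_k_integral, hcid_k_integral]
  -- inner integral over Ω² for fixed (a, b)
  have inner2 : ∀ p : ℝ × ℝ, ∫ w, F w p ∂μ = 2 * g p := by
    intro p
    set u : Ω → ℝ := fun ω => if X ω < p.1 then 1 else 0 with hu_def
    set v : Ω → ℝ := fun ω => if Y ω < p.2 then 1 else 0 with hv_def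
    have hum : Measurable u :=
      Measurable.ite (hX measurableSet_Iio) measurable_const measurable_const
    have hvm : Measurable v :=
      Measurable.ite (hY measurableSet_Iio) measurable_const measurable_const
    have hu : MemLp u 2 P := by
      refine MemLp.of_bound hum.aestronglyMeasurable 1 (Filter.Eventually.of_forall fun ω => ?_)
      simp only [hu_def, Real.norm_eq_abs]
      split <;> simp
    have hv : MemLp v 2 P := by
      refine MemLp.of_bound hvm.aestronglyMeasurable 1 (Filter.Eventually.of_forall fun ω => ?_)
      simp only [hv_def, Real.norm_eq_abs]
      split <;> simp
    have hFp : (fun w : Ω × Ω => F w p) = fun w => (u w.1 - u w.2) * (v w.1 - v w.2) := by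
      funext w
      simp only [hF, hcid_k, hu_def, hv_def]
      ring
    have eu : ∫ ω, u ω ∂P = (P {ω | X ω < p.1}).toReal := by
      have : u = Set.indicator {ω | X ω < p.1} (fun _ => (1:ℝ)) := by
        funext ω; simp [hu_def, Set.indicator_apply]
      rw [this, integral_indicator_const (1:ℝ) (show MeasurableSet {ω | X ω < p.1} from hX measurableSet_Iio), smul_eq_mul, mul_one, measureReal_def]
    have ev : ∫ ω, v ω ∂P = (P {ω | Y ω < p.2}).toReal := by
      have : v = Set.indicator {ω | Y ω < p.2} (fun _ => (1:ℝ)) := by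
        funext ω; simp [hv_def, Set.indicator_apply]
      rw [this, integral_indicator_const (1:ℝ) (show MeasurableSet {ω | Y ω < p.2} from hY measurableSet_Iio), smul_eq_mul, mul_one, measureReal_def]
    have euv : ∫ ω, u ω * v ω ∂P = (P {ω | X ω < p.1 ∧ Y ω < p.2}).toReal := by
      have hs : MeasurableSet {ω | X ω < p.1 ∧ Y ω < p.2} :=
        MeasurableSet.inter (hX measurableSet_Iio) (hY measurableSet_Iio)
      have : (fun ω => u ω * v ω)
          = Set.indicator {ω | X ω < p.1 ∧ Y ω < p.2} (fun _ => (1:ℝ)) := by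
        funext ω
        by_cases h1 : X ω < p.1 <;> by_cases h2 : Y ω < p.2 <;>
          simp [hu_def, hv_def, Set.indicator_apply, h1, h2]
      rw [this, integral_indicator_const (1:ℝ) hs, smul_eq_mul, mul_one, measureReal_def]
    rw [hFp, hcid_expand hu hv, euv, eu, ev]
  -- assemble everything
  have hGint : Integrable g ν := by
    have h2g : Integrable (fun p : ℝ × ℝ => 2 * g p) ν := by
      have h := hbig.integral_prod_right
      rwa [show (fun p : ℝ × ℝ => ∫ w, F w p ∂μ) = fun p => 2 * g p from funext inner2] at h
    have := h2g.const_mul (2⁻¹ : ℝ)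
    simpa [← mul_assoc] using this
  have main : 2 * (∫ ω, ψ (X ω) * ψ (Y ω) ∂P
      - (∫ ω, ψ (X ω) ∂P) * (∫ ω, ψ (Y ω) ∂P)) = 2 * ∫ a, ∫ b, g (a, b) ∂ψ.measure ∂ψ.measure := by
    calc 2 * (∫ ω, ψ (X ω) * ψ (Y ω) ∂P - (∫ ω, ψ (X ω) ∂P) * (∫ ω, ψ (Y ω) ∂P))
        = ∫ w, (ψ (X w.1) - ψ (X w.2)) * (ψ (Y w.1) - ψ (Y w.2)) ∂μ :=
          (hcid_expand hψX2 hψY2).symm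
      _ = ∫ w, ∫ p, F w p ∂ν ∂μ := by
          rw [show (fun w : Ω × Ω => (ψ (X w.1) - ψ (X w.2)) * (ψ (Y w.1) - ψ (Y w.2)))
            = fun w => ∫ p, F w p ∂ν from (funext inner1).symm]
      _ = ∫ p, ∫ w, F w p ∂μ ∂ν := integral_integral_swap hbig
      _ = ∫ p, 2 * g p ∂ν := by
          rw [show (fun p : ℝ × ℝ => ∫ w, F w p ∂μ) = fun p => 2 * g p from funext inner2]
      _ = 2 * ∫ p, g p ∂ν := integral_const_mul 2 g
      _ = 2 * ∫ a, ∫ b, g (a, b) ∂ψ.measure ∂ψ.measure := by rw [integral_prod g hGint]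
  have hrfl : ∫ a, ∫ b, g (a, b) ∂ψ.measure ∂ψ.measure
      = ∫ a, ∫ b, ((P {ω | X ω < a ∧ Y ω < b}).toReal
          - (P {ω | X ω < a}).toReal * (P {ω | Y ω < b}).toReal) ∂ψ.measure ∂ψ.measure := rfl
  linarith [main, hrfl]
end

section
/- Order statistics are positively quadrant dependent: if S_1, ..., S_n are i.i.d. real random variables with continuous distribution and S_{(i)}, S_{(j)} denote the i-th and j-th order statistics (i < j), then for all real a, b, P(S_{(i)} < a, S_{(j)} < b) ≥ P(S_{(i)} < a)·P(S_{(j)} < b). -/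
open MeasureTheory ProbabilityTheory

/-- The `i`-th order statistic (ascending) of the sample `fun k => S k ω`. -/
noncomputable def orderStat {Ω : Type*} {n : ℕ} (S : Fin n → Ω → ℝ) (i : Fin n) (ω : Ω) : ℝ :=
  (fun k => S k ω) (Tuple.sort (fun k => S k ω) i)

open Finset ENNReal

lemma orderStat_lt_iff {Ω : Type*} {n : ℕ} (S : Fin n → Ω → ℝ) (i : Fin n) (ω : Ω) (t : ℝ) :
    orderStat S i ω < t ↔ (i : ℕ) < (univ.filter fun k => S k ω < t).card := by
  set f : Fin n → ℝ := fun k => S k ω with hf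
  set σ := Tuple.sort f with hσ
  have mono : Monotone (f ∘ σ) := Tuple.monotone_sort f
  rw [show (univ.filter fun k => S k ω < t) = univ.filter fun k => f k < t from rfl]
  constructor
  · intro h
    have hsub : (Finset.Iic i).image σ ⊆ univ.filter fun k => f k < t := by
      intro k hk
      simp only [Finset.mem_image, Finset.mem_Iic] at hk
      obtain ⟨l, hl, rfl⟩ := hk
      simp only [mem_filter, mem_univ, true_and]
      exact lt_of_le_of_lt (mono hl) h
    calc (i : ℕ) < (i : ℕ) + 1 := Nat.lt_succ_self _
      _ = (Finset.Iic i).card := (Fin.card_Iic i).symm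
      _ = ((Finset.Iic i).image σ).card := (Finset.card_image_of_injective _ σ.injective).symm
      _ ≤ _ := Finset.card_le_card hsub
  · intro h
    set L := univ.filter fun l => f (σ l) < t with hL
    have hcard : L.card = (univ.filter fun k => f k < t).card := by
      apply Finset.card_bij (fun l _ => σ l)
      · intro l hl; simp only [hL, mem_filter, mem_univ, true_and] at hl ⊢; exact hl
      · intro l _ l' _ hll'; exact σ.injective hll'
      · intro k hk
        refine ⟨σ.symm k, ?_, by simp⟩
        simp only [hL, mem_filter, mem_univ, true_and] at hk ⊢
        simpa using hk
    by_contra hcon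
    push_neg at hcon
    have hnot : i ∉ L := by simp only [hL, mem_filter, mem_univ, true_and]; exact not_lt.2 hcon
    have hsub : L ⊆ Finset.Iio i := by
      intro l hl
      simp only [Finset.mem_Iio]
      by_contra hli
      push_neg at hli
      exact hnot (by
        simp only [hL, mem_filter, mem_univ, true_and] at hl ⊢
        exact lt_of_le_of_lt (mono hli) hl)
    have := Finset.card_le_card hsub
    rw [hcard, Fin.card_Iio] at this
    omega

lemma rearr_ennreal {u v s t : ℝ≥0∞} (huv : u ≤ v) (hst : s ≤ t) :
    u * t + v * s ≤ u * s + v * t := by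
  obtain ⟨d, rfl⟩ := exists_add_of_le hst
  rw [mul_add, mul_add]
  calc u * s + u * d + v * s ≤ u * s + v * d + v * s := by gcongr
    _ = u * s + (v * s + v * d) := by ring

lemma chebyshev_assoc {α : Type*} [MeasurableSpace α] (μ : Measure α) [IsProbabilityMeasure μ]
    (f g : α → ℝ≥0∞) (hf : Measurable f) (hg : Measurable g)
    (hfg : ∀ x y, (f x ≤ f y ∧ g x ≤ g y) ∨ (f y ≤ f x ∧ g y ≤ g x)) :
    (∫⁻ x, f x ∂μ) * ∫⁻ x, g x ∂μ ≤ ∫⁻ x, f x * g x ∂μ := by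
  have hpt : ∀ x y, f x * g y + f y * g x ≤ f x * g x + f y * g y := by
    intro x y
    rcases hfg x y with ⟨h1, h2⟩ | ⟨h1, h2⟩
    · exact rearr_ennreal h1 h2
    · rw [add_comm (f x * g y), add_comm (f x * g x)]
      exact rearr_ennreal h1 h2
  have key : ∫⁻ x, ∫⁻ y, (f x * g y + f y * g x) ∂μ ∂μ
      ≤ ∫⁻ x, ∫⁻ y, (f x * g x + f y * g y) ∂μ ∂μ :=
    lintegral_mono fun x => lintegral_mono fun y => hpt x y
  have lhs : ∫⁻ x, ∫⁻ y, (f x * g y + f y * g x) ∂μ ∂μ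
      = 2 * ((∫⁻ x, f x ∂μ) * ∫⁻ x, g x ∂μ) := by
    have : ∀ x, ∫⁻ y, (f x * g y + f y * g x) ∂μ
        = f x * (∫⁻ y, g y ∂μ) + (∫⁻ y, f y ∂μ) * g x := by
      intro x
      rw [lintegral_add_left (hg.const_mul _), lintegral_const_mul _ hg,
        lintegral_mul_const _ hf]
    simp_rw [this]
    rw [lintegral_add_left (hf.mul_const _), lintegral_mul_const _ hf,
      lintegral_const_mul _ hg]
    ring
  have rhs : ∫⁻ x, ∫⁻ y, (f x * g x + f y * g y) ∂μ ∂μ = 2 * ∫⁻ x, f x * g x ∂μ := by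
    have : ∀ x, ∫⁻ y, (f x * g x + f y * g y) ∂μ
        = f x * g x + ∫⁻ y, f y * g y ∂μ := by
      intro x
      rw [lintegral_add_left measurable_const, lintegral_const, measure_univ, mul_one]
    simp_rw [this]
    rw [lintegral_add_right _ measurable_const, lintegral_const, measure_univ, mul_one]
    ring
  rw [lhs, rhs] at key
  exact (ENNReal.mul_le_mul_iff_right (by norm_num) (by norm_num)).mp key

lemma harris_pi (μ : Measure ℝ) [IsProbabilityMeasure μ] :
    ∀ (n : ℕ) (f g : (Fin n → ℝ) → ℝ≥0∞), Measurable f → Measurable g →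
      Antitone f → Antitone g →
      (∫⁻ x, f x ∂(Measure.pi fun _ : Fin n => μ)) *
          (∫⁻ x, g x ∂(Measure.pi fun _ : Fin n => μ))
        ≤ ∫⁻ x, f x * g x ∂(Measure.pi fun _ : Fin n => μ) := by
  intro n
  induction n with
  | zero =>
    intro f g hf hg _ _
    have hconst : ∀ h : (Fin 0 → ℝ) → ℝ≥0∞,
        ∫⁻ x, h x ∂(Measure.pi fun _ : Fin 0 => μ) = h default := by
      intro h
      rw [show h = fun _ => h default from funext fun x => by rw [Subsingleton.elim x default]]
      simp
    rw [hconst f, hconst g, hconst fun x => f x * g x]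
  | succ n IH =>
    intro f g hf hg haf hag
    set π : Measure (Fin n → ℝ) := Measure.pi fun _ : Fin n => μ with hπ
    set e := MeasurableEquiv.piFinSuccAbove (fun _ : Fin (n + 1) => ℝ) 0 with he
    have mp : MeasurePreserving e (Measure.pi fun _ : Fin (n + 1) => μ) (μ.prod π) :=
      measurePreserving_piFinSuccAbove (fun _ : Fin (n + 1) => μ) 0
    have hsymm_mono : ∀ p q : ℝ × (Fin n → ℝ), p.1 ≤ q.1 → p.2 ≤ q.2 →
        (e.symm p : Fin (n + 1) → ℝ) ≤ e.symm q := by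
      intro p q h1 h2 k
      have hp : ∀ r : ℝ × (Fin n → ℝ),
          (e.symm r : Fin (n + 1) → ℝ) = Fin.insertNth 0 r.1 r.2 := fun r => rfl
      rw [hp, hp]
      refine Fin.cases ?_ (fun j => ?_) k
      · simpa using h1
      · have hz : (0 : Fin (n + 1)).succAbove j = j.succ := Fin.zero_succAbove j
        rw [← hz, Fin.insertNth_apply_succAbove, Fin.insertNth_apply_succAbove]
        exact h2 j
    have hfs : Measurable fun p : ℝ × (Fin n → ℝ) => f (e.symm p) :=
      hf.comp e.symm.measurable
    have hgs : Measurable fun p : ℝ × (Fin n → ℝ) => g (e.symm p) :=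
      hg.comp e.symm.measurable
    have hint : ∀ h : (Fin (n + 1) → ℝ) → ℝ≥0∞, Measurable h →
        ∫⁻ x, h x ∂(Measure.pi fun _ : Fin (n + 1) => μ)
          = ∫⁻ t, ∫⁻ y, h (e.symm (t, y)) ∂π ∂μ := by
      intro h hh
      rw [← (mp.symm e).lintegral_comp hh]
      exact lintegral_prod _ (hh.comp e.symm.measurable).aemeasurable
    set F := fun t : ℝ => ∫⁻ y, f (e.symm (t, y)) ∂π with hF
    set G := fun t : ℝ => ∫⁻ y, g (e.symm (t, y)) ∂π with hG
    have hFmeas : Measurable F := Measurable.lintegral_prod_right' hfs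
    have hGmeas : Measurable G := Measurable.lintegral_prod_right' hgs
    have hFanti : Antitone F := fun t t' h =>
      lintegral_mono fun y => haf (hsymm_mono (t, y) (t', y) h le_rfl)
    have hGanti : Antitone G := fun t t' h =>
      lintegral_mono fun y => hag (hsymm_mono (t, y) (t', y) h le_rfl)
    have hsec : ∀ t, F t * G t ≤ ∫⁻ y, f (e.symm (t, y)) * g (e.symm (t, y)) ∂π := by
      intro t
      refine IH (fun y => f (e.symm (t, y))) (fun y => g (e.symm (t, y))) ?_ ?_ ?_ ?_
      · exact hfs.comp (measurable_const.prodMk measurable_id)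
      · exact hgs.comp (measurable_const.prodMk measurable_id)
      · exact fun y y' h => haf (hsymm_mono (t, y) (t, y') le_rfl h)
      · exact fun y y' h => hag (hsymm_mono (t, y) (t, y') le_rfl h)
    calc (∫⁻ x, f x ∂(Measure.pi fun _ : Fin (n + 1) => μ)) *
          (∫⁻ x, g x ∂(Measure.pi fun _ : Fin (n + 1) => μ))
        = (∫⁻ t, F t ∂μ) * ∫⁻ t, G t ∂μ := by rw [hint f hf, hint g hg]
      _ ≤ ∫⁻ t, F t * G t ∂μ := by
          refine chebyshev_assoc μ F G hFmeas hGmeas fun x y => ?_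
          rcases le_total x y with h | h
          · exact Or.inr ⟨hFanti h, hGanti h⟩
          · exact Or.inl ⟨hFanti h, hGanti h⟩
      _ ≤ ∫⁻ t, ∫⁻ y, f (e.symm (t, y)) * g (e.symm (t, y)) ∂π ∂μ := lintegral_mono hsec
      _ = ∫⁻ x, f x * g x ∂(Measure.pi fun _ : Fin (n + 1) => μ) :=
          (hint (fun x => f x * g x) (hf.mul hg)).symm

/-- Order statistics of an i.i.d. continuous sample are positively quadrant dependent:
for `i < j` and all real `a, b`,
`P(S_(i) < a, S_(j) < b) ≥ P(S_(i) < a) · P(S_(j) < b)`. -/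
theorem orderStat_positive_quadrant_dependent {Ω : Type*} [MeasurableSpace Ω]
    (P : Measure Ω) [IsProbabilityMeasure P] {n : ℕ}
    (S : Fin n → Ω → ℝ) (hmeas : ∀ i, Measurable (S i))
    (μ : Measure ℝ)
    (hiid : iIndepFun S P)
    (hdist : ∀ i, Measure.map (S i) P = μ)
    (hcont : ∀ x : ℝ, μ {x} = 0)
    (i j : Fin n) (hij : i < j) (a b : ℝ) :
    P {ω | orderStat S i ω < a} * P {ω | orderStat S j ω < b}
      ≤ P {ω | orderStat S i ω < a ∧ orderStat S j ω < b} := by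
  haveI hμ : IsProbabilityMeasure μ := by
    rw [← hdist i]; exact Measure.isProbabilityMeasure_map (hmeas i).aemeasurable
  set T : Ω → (Fin n → ℝ) := fun ω k => S k ω with hT
  have hTmeas : Measurable T := measurable_pi_lambda _ hmeas
  set π : Measure (Fin n → ℝ) := Measure.pi fun _ : Fin n => μ with hπ
  have hmap : Measure.map T P = π := by
    refine (Measure.pi_eq fun s hs => ?_).symm
    rw [Measure.map_apply hTmeas (MeasurableSet.univ_pi hs)]
    have hpre : T ⁻¹' Set.pi Set.univ s = ⋂ k ∈ Finset.univ, S k ⁻¹' s k := by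
      ext ω; simp [Set.mem_pi, hT]
    rw [hpre, hiid.measure_inter_preimage_eq_mul Finset.univ (fun k _ => hs k)]
    refine Finset.prod_congr rfl fun k _ => ?_
    rw [← hdist k, Measure.map_apply (hmeas k) (hs k)]
  set A : Set (Fin n → ℝ) := {x | (i : ℕ) < (univ.filter fun k => x k < a).card} with hA
  set B : Set (Fin n → ℝ) := {x | (j : ℕ) < (univ.filter fun k => x k < b).card} with hB
  have hcard_meas : ∀ t : ℝ,
      Measurable fun x : Fin n → ℝ => ((univ.filter fun k => x k < t).card : ℕ) := by
    intro t
    simp_rw [Finset.card_filter]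
    exact Finset.measurable_sum _ fun k _ => Measurable.ite
      (measurableSet_lt (measurable_pi_apply k) measurable_const)
      measurable_const measurable_const
  have hAmeas : MeasurableSet A := (hcard_meas a) (measurableSet_Ioi (a := (i : ℕ)))
  have hBmeas : MeasurableSet B := (hcard_meas b) (measurableSet_Ioi (a := (j : ℕ)))
  have hlower : ∀ (t : ℝ) (m : ℕ) (x y : Fin n → ℝ), x ≤ y →
      m < (univ.filter fun k => y k < t).card → m < (univ.filter fun k => x k < t).card := by
    intro t m x y hxy hy
    refine lt_of_lt_of_le hy (Finset.card_le_card fun k hk => ?_)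
    simp only [mem_filter, mem_univ, true_and] at hk ⊢
    exact lt_of_le_of_lt (hxy k) hk
  have hAind : Antitone (A.indicator (1 : (Fin n → ℝ) → ℝ≥0∞)) := by
    intro x y hxy
    by_cases hy : y ∈ A
    · have hx : x ∈ A := hlower a i x y hxy hy
      simp [Set.indicator_of_mem, hx, hy]
    · simp [Set.indicator_of_notMem hy]
  have hBind : Antitone (B.indicator (1 : (Fin n → ℝ) → ℝ≥0∞)) := by
    intro x y hxy
    by_cases hy : y ∈ B
    · have hx : x ∈ B := hlower b j x y hxy hy
      simp [Set.indicator_of_mem, hx, hy]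
    · simp [Set.indicator_of_notMem hy]
  have harris := harris_pi μ n (A.indicator 1) (B.indicator 1)
    (measurable_one.indicator hAmeas) (measurable_one.indicator hBmeas) hAind hBind
  have hprod : (fun x => A.indicator (1 : (Fin n → ℝ) → ℝ≥0∞) x * B.indicator 1 x)
      = (A ∩ B).indicator 1 := by
    funext x
    by_cases hx : x ∈ A <;> by_cases hx' : x ∈ B <;>
      simp [Set.indicator_apply, hx, hx', Set.mem_inter_iff]
  rw [lintegral_indicator_one hAmeas, lintegral_indicator_one hBmeas] at harris
  have hharris2 : π A * π B ≤ π (A ∩ B) := by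
    refine le_trans harris ?_
    rw [show ∫⁻ x, A.indicator (1 : (Fin n → ℝ) → ℝ≥0∞) x * B.indicator 1 x ∂π
        = ∫⁻ x, (A ∩ B).indicator 1 x ∂π from by rw [show (fun x => A.indicator
          (1 : (Fin n → ℝ) → ℝ≥0∞) x * B.indicator 1 x) = (A ∩ B).indicator 1 from hprod],
      lintegral_indicator_one (hAmeas.inter hBmeas)]
  have hsetA : {ω | orderStat S i ω < a} = T ⁻¹' A :=
    Set.ext fun ω => orderStat_lt_iff S i ω a
  have hsetB : {ω | orderStat S j ω < b} = T ⁻¹' B :=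
    Set.ext fun ω => orderStat_lt_iff S j ω b
  have hsetAB : {ω | orderStat S i ω < a ∧ orderStat S j ω < b} = T ⁻¹' (A ∩ B) :=
    Set.ext fun ω => and_congr (orderStat_lt_iff S i ω a) (orderStat_lt_iff S j ω b)
  rw [hsetA, hsetB, hsetAB,
    show P (T ⁻¹' A) = π A from by rw [← hmap, Measure.map_apply hTmeas hAmeas],
    show P (T ⁻¹' B) = π B from by rw [← hmap, Measure.map_apply hTmeas hBmeas],
    show P (T ⁻¹' (A ∩ B)) = π (A ∩ B) from by
      rw [← hmap, Measure.map_apply hTmeas (hAmeas.inter hBmeas)]]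
  exact hharris2
end
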